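/- Let Λ be a non-ordinary numerical semigroup. Then Λ = ω(Λ)·shrink(Λ) ∪ {n ∈ ℕ : n ≥ c(Λ)}, where ω·S = {ω·s : s ∈ S}. -/

import Mathlib

open Pointwise

namespace NumSgpPaper

/-- `S` is a numerical semigroup: an additive submonoid of ℕ with finite complement. -/
structure IsNumSgp (S : Set ℕ) : Prop where
  zero_mem : 0 ∈ S
  add_mem : ∀ ⦃a b : ℕ⦄, a ∈ S → b ∈ S → a + b ∈ S
  cofinite : Sᶜ.Finite

/-- The Frobenius number: the largest gap of `S` (junk value `0` if there are no gaps). -/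
noncomputable def frob (S : Set ℕ) : ℕ := sSup Sᶜ

open Classical in
/-- The conductor: one plus the largest gap, and `0` if there are no gaps (so `c(ℕ) = 0`). -/
noncomputable def conductor (S : Set ℕ) : ℕ := if Sᶜ = ∅ then 0 else frob S + 1

/-- The genus: the number of gaps. -/
noncomputable def genus (S : Set ℕ) : ℕ := Sᶜ.ncard

/-- The multiplicity: the smallest positive element. -/
noncomputable def mult (S : Set ℕ) : ℕ := sInf {n : ℕ | n ∈ S ∧ 0 < n}

/-- The jump: the difference between the second and first positive elements. -/
noncomputable def jump (S : Set ℕ) : ℕ := sInf {n : ℕ | n ∈ S ∧ mult S < n} - mult S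

/-- A minimal generator: a positive element of `S` that is not the sum of
two positive elements of `S`. -/
def IsMinGen (S : Set ℕ) (x : ℕ) : Prop :=
  0 < x ∧ x ∈ S ∧ ¬ ∃ a b : ℕ, 0 < a ∧ 0 < b ∧ a ∈ S ∧ b ∈ S ∧ a + b = x

/-- A right generator: a minimal generator larger than the Frobenius number. -/
def IsRightGen (S : Set ℕ) (x : ℕ) : Prop := IsMinGen S x ∧ frob S < x

/-- A strong generator: a right generator `σ` such that `σ + m(S)` is a minimal
generator of `S \ {σ}`. -/
def IsStrongGen (S : Set ℕ) (σ : ℕ) : Prop :=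
  IsRightGen S σ ∧ IsMinGen (S \ {σ}) (σ + mult S)

/-- `S` is ordinary when its gaps are exactly `{1, …, g(S)}`. -/
def IsOrdinary (S : Set ℕ) : Prop := Sᶜ = Set.Icc 1 (genus S)

/-- The left elements: the elements of `S` smaller than the Frobenius number. -/
def leftEls (S : Set ℕ) : Set ℕ := {x : ℕ | x ∈ S ∧ x < frob S}

/-- The gcd of a set of natural numbers. -/
noncomputable def setGcd (A : Set ℕ) : ℕ :=
  sInf {d : ℕ | (∀ a ∈ A, d ∣ a) ∧ ∀ e : ℕ, (∀ a ∈ A, e ∣ a) → e ∣ d}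

/-- `ω(S)`: the gcd of the left elements of `S`. -/
noncomputable def omega' (S : Set ℕ) : ℕ := setGcd (leftEls S)

/-- The shrinking of `S`: the additive submonoid of ℕ generated by the left
elements divided by their gcd. -/
noncomputable def shrink (S : Set ℕ) : Set ℕ :=
  (AddSubmonoid.closure ((fun x => x / omega' S) '' leftEls S) : AddSubmonoid ℕ)

/-- `T` is a descendant of `S`: a numerical semigroup contained in `S` all of whose
missing elements lie beyond the Frobenius number of `S`. -/
def IsDescendant (S T : Set ℕ) : Prop :=
  IsNumSgp T ∧ T ⊆ S ∧ ∀ x ∈ S \ T, frob S < x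

/-- The pseudo-ordinary semigroup `P_{m,u} = {0, m} ∪ {n : n ≥ m + u}`. -/
def P (m u : ℕ) : Set ℕ := {0, m} ∪ {n : ℕ | m + u ≤ n}

/-- The submonoid of ℕ generated by the interval `{a, …, b}`. -/
def intervalSgp (a b : ℕ) : Set ℕ := (AddSubmonoid.closure (Set.Icc a b) : AddSubmonoid ℕ)


/-- A non-ordinary numerical semigroup satisfies
`Λ = ω(Λ)·shrink(Λ) ∪ {n : n ≥ c(Λ)}`. -/
theorem stmt4 (Λ : Set ℕ) (h : IsNumSgp Λ) (hord : ¬ IsOrdinary Λ) :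
    Λ = (fun x => omega' Λ * x) '' shrink Λ ∪ {n : ℕ | conductor Λ ≤ n} := by
  have hne : Λᶜ.Nonempty := by
    rw [Set.nonempty_iff_ne_empty]
    intro hempty
    apply hord
    unfold IsOrdinary genus
    rw [hempty]
    simp
  have hbdd : BddAbove Λᶜ := h.cofinite.bddAbove
  have hfrob_mem : frob Λ ∈ Λᶜ := Nat.sSup_mem hne hbdd
  have hgap_le : ∀ y ∈ Λᶜ, y ≤ frob Λ := fun y hy => le_csSup hbdd hy
  have hbig : ∀ n, frob Λ < n → n ∈ Λ := by
    intro n hn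
    by_contra hc
    exact absurd (hgap_le n hc) (by omega)
  have hcond : conductor Λ = frob Λ + 1 := by
    rw [conductor, if_neg (Set.nonempty_iff_ne_empty.mp hne)]
  -- a positive left element exists
  have hex : ∃ x, x ∈ Λ ∧ 0 < x ∧ x < frob Λ := by
    by_contra hc
    push_neg at hc
    apply hord
    have hgaps : Λᶜ = Set.Icc 1 (frob Λ) := by
      ext y
      constructor
      · intro hy
        refine ⟨Nat.one_le_iff_ne_zero.2 ?_, hgap_le y hy⟩
        rintro rfl; exact hy h.zero_mem
      · rintro ⟨h1, h2⟩ hyΛ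
        have := hc y hyΛ h1
        have : y = frob Λ := by omega
        subst this
        exact hfrob_mem hyΛ
    have hcard : (Set.Icc 1 (frob Λ)).ncard = frob Λ := by
      rw [← Finset.coe_Icc, Set.ncard_coe_finset, Nat.card_Icc]
      omega
    unfold IsOrdinary genus
    rw [hgaps, hcard]
  obtain ⟨x0, hx0Λ, hx0pos, hx0lt⟩ := hex
  have hLfin : (leftEls Λ).Finite :=
    Set.Finite.subset (Set.finite_Iio (frob Λ)) (fun x hx => hx.2)
  have hdmem : hLfin.toFinset.gcd id ∈
      {d : ℕ | (∀ a ∈ leftEls Λ, d ∣ a) ∧ ∀ e : ℕ, (∀ a ∈ leftEls Λ, e ∣ a) → e ∣ hLfin.toFinset.gcd id} :=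
    ⟨fun a ha => Finset.gcd_dvd (hLfin.mem_toFinset.2 ha),
     fun e he => Finset.dvd_gcd (fun b hb => he b (hLfin.mem_toFinset.1 hb))⟩
  have homega_mem : omega' Λ ∈
      {d : ℕ | (∀ a ∈ leftEls Λ, d ∣ a) ∧ ∀ e : ℕ, (∀ a ∈ leftEls Λ, e ∣ a) → e ∣ d} := by
    have := Nat.sInf_mem (s := {d : ℕ | (∀ a ∈ leftEls Λ, d ∣ a) ∧ ∀ e : ℕ, (∀ a ∈ leftEls Λ, e ∣ a) → e ∣ d}) ⟨_, hdmem⟩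
    exact this
  have hdvd : ∀ a ∈ leftEls Λ, omega' Λ ∣ a := homega_mem.1
  have hωpos : 0 < omega' Λ := by
    have hd := hdvd x0 ⟨hx0Λ, hx0lt⟩
    rcases Nat.eq_zero_or_pos (omega' Λ) with h0 | h0
    · rw [h0] at hd
      exact absurd (Nat.eq_zero_of_zero_dvd hd) (by omega)
    · exact h0
  ext n
  constructor
  · intro hn
    rcases lt_trichotomy n (frob Λ) with hlt | heq | hgt
    · left
      refine ⟨n / omega' Λ, ?_, ?_⟩
      · exact AddSubmonoid.subset_closure (Set.mem_image_of_mem _ ⟨hn, hlt⟩)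
      · exact Nat.mul_div_cancel' (hdvd n ⟨hn, hlt⟩)
    · exact absurd hn (heq ▸ hfrob_mem)
    · right
      simp only [Set.mem_setOf_eq, hcond]
      omega
  · rintro (⟨s, hs, rfl⟩ | hn)
    · induction hs using AddSubmonoid.closure_induction with
      | mem x hx =>
        obtain ⟨a, ha, rfl⟩ := hx
        show omega' Λ * (a / omega' Λ) ∈ Λ
        rw [Nat.mul_div_cancel' (hdvd a ha)]
        exact ha.1
      | zero => simpa using h.zero_mem
      | add a b _ _ ha hb =>
        show omega' Λ * (a + b) ∈ Λ
        rw [mul_add]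
        exact h.add_mem ha hb
    · apply hbig
      simp only [Set.mem_setOf_eq, hcond] at hn
      omega


end NumSgpPaper
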